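/- Let σ ∈ ℝ and p be a real polynomial with p(0) = 0, p not identically zero, and write a_d ≠ 0 for the leading coefficient of p, d = deg p ≥ 1. Then there exists T₀ ≥ 1 such that the integrals J(T) = ∫_{T₀}^{T} exp(2πi(σt + p(e^t))) dt are bounded uniformly in T ≥ T₀. -/

import Mathlib

open Polynomial Filter Real Set MeasureTheory

private lemma derivLC (P : Polynomial ℝ) (hd : 1 ≤ P.natDegree) :
    P.derivative.leadingCoeff = P.natDegree * P.leadingCoeff := by
  have h1 : P.derivative.degree = (P.natDegree - 1 : ℕ) :=
    Polynomial.degree_derivative_eq P (by omega)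
  have h2 : P.derivative.natDegree = P.natDegree - 1 :=
    Polynomial.natDegree_eq_of_degree_eq_some h1
  rw [Polynomial.leadingCoeff, h2, Polynomial.coeff_derivative]
  have h3 : P.natDegree - 1 + 1 = P.natDegree := by omega
  rw [h3, Polynomial.leadingCoeff]
  have h4 : ((P.natDegree - 1 : ℕ) : ℝ) = (P.natDegree : ℝ) - 1 := by
    have := Nat.cast_sub (R := ℝ) hd
    simpa using this
  rw [h4]; ring

private lemma evPos (P : Polynomial ℝ) (hP : P ≠ 0) (h : 0 < P.leadingCoeff) :
    ∀ᶠ x in atTop, 0 < P.eval x := by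
  rcases Nat.eq_zero_or_pos P.natDegree with h0 | h1
  · have hC : P = Polynomial.C (P.coeff 0) := Polynomial.eq_C_of_natDegree_eq_zero h0
    have : P.leadingCoeff = P.coeff 0 := by rw [Polynomial.leadingCoeff, h0]
    filter_upwards with x
    rw [hC, Polynomial.eval_C]
    rw [hC] at h
    simpa using h
  · have hdeg : 0 < P.degree := Polynomial.natDegree_pos_iff_degree_pos.mp h1
    have := P.tendsto_atTop_of_leadingCoeff_nonneg hdeg h.le
    exact this.eventually_gt_atTop 0

private lemma stmt3_aux (σ : ℝ) (p : Polynomial ℝ) (hp : p ≠ 0)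
    (hd : 1 ≤ p.natDegree) (hlc : 0 < p.leadingCoeff) :
    ∃ T₀ : ℝ, 1 ≤ T₀ ∧ ∃ C : ℝ, ∀ T : ℝ, T₀ ≤ T →
      ‖∫ t in T₀..T,
          Complex.exp (2 * Real.pi * Complex.I * ((σ * t + p.eval (Real.exp t) : ℝ) : ℂ))‖ ≤ C := by
  have hpd0 : p.derivative ≠ 0 := fun h => by
    have := Polynomial.natDegree_eq_zero_of_derivative_eq_zero h; omega
  set q : Polynomial ℝ := Polynomial.X * p.derivative with hq
  have hq0 : q ≠ 0 := mul_ne_zero Polynomial.X_ne_zero hpd0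
  have hpdnd : p.derivative.natDegree = p.natDegree - 1 :=
    Polynomial.natDegree_eq_of_degree_eq_some (Polynomial.degree_derivative_eq p (by omega))
  have hqnd : q.natDegree = p.natDegree := by
    rw [hq, Polynomial.natDegree_mul Polynomial.X_ne_zero hpd0, Polynomial.natDegree_X]
    omega
  have hqlcpos : 0 < q.leadingCoeff := by
    rw [hq, Polynomial.leadingCoeff_mul, Polynomial.leadingCoeff_X, one_mul, derivLC p hd]
    have : (0:ℝ) < p.natDegree := by exact_mod_cast Nat.pos_of_ne_zero (by omega)
    positivity
  have hqd0 : q.derivative ≠ 0 := fun h => by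
    have := Polynomial.natDegree_eq_zero_of_derivative_eq_zero h; omega
  have hqdlc : 0 < q.derivative.leadingCoeff := by
    rw [derivLC q (by omega)]
    have : (0:ℝ) < q.natDegree := by exact_mod_cast Nat.pos_of_ne_zero (by omega)
    positivity
  set ψ : ℝ → ℝ := fun t => σ + q.eval (Real.exp t) with hψdef
  set ψd : ℝ → ℝ := fun t => q.derivative.eval (Real.exp t) * Real.exp t with hψddef
  have hψtop : Tendsto ψ atTop atTop := by
    have h1 : Tendsto (fun x => q.eval x) atTop atTop :=
      q.tendsto_atTop_of_leadingCoeff_nonneg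
        (Polynomial.natDegree_pos_iff_degree_pos.mp (by omega)) hqlcpos.le
    exact tendsto_atTop_add_const_left _ σ (h1.comp Real.tendsto_exp_atTop)
  have hψdev : ∀ᶠ t in atTop, 0 ≤ ψd t := by
    filter_upwards [Real.tendsto_exp_atTop.eventually (evPos q.derivative hqd0 hqdlc)] with t ht
    exact mul_nonneg ht.le (Real.exp_pos t).le
  obtain ⟨T₁, hT₁⟩ := (((hψtop.eventually_ge_atTop 1).and hψdev).and
    (eventually_ge_atTop (1:ℝ))).exists_forall_of_atTop
  set T₀ : ℝ := max T₁ 1 with hT₀def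
  have hT₀1 : (1:ℝ) ≤ T₀ := le_max_right _ _
  have hfacts : ∀ t, T₀ ≤ t → 1 ≤ ψ t ∧ 0 ≤ ψd t :=
    fun t ht => (hT₁ t ((le_max_left _ _).trans ht)).1
  -- derivative of ψ
  have hψderiv : ∀ t : ℝ, HasDerivAt ψ (ψd t) t := by
    intro t
    have h1 : HasDerivAt (fun t => q.eval (Real.exp t))
        (q.derivative.eval (Real.exp t) * Real.exp t) t :=
      (q.hasDerivAt (Real.exp t)).comp t (Real.hasDerivAt_exp t)
    exact h1.const_add σ
  have hψcont : Continuous ψ := by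
    have := (q.continuous).comp Real.continuous_exp
    exact continuous_const.add this
  have hψdcont : Continuous ψd :=
    ((q.derivative.continuous).comp Real.continuous_exp).mul Real.continuous_exp
  have hmono : MonotoneOn ψ (Set.Ici T₀) := by
    apply monotoneOn_of_deriv_nonneg (convex_Ici T₀) hψcont.continuousOn
    · intro x hx
      exact (hψderiv x).differentiableAt.differentiableWithinAt
    · intro x hx
      rw [interior_Ici] at hx
      rw [(hψderiv x).deriv]
      exact (hfacts x (le_of_lt hx)).2
  set c : ℂ := 2 * Real.pi * Complex.I with hc
  have hc0 : c ≠ 0 := by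
    simp [hc, Real.pi_ne_zero, Complex.I_ne_zero, Complex.ext_iff, Real.pi_pos.ne']
  have hcnorm : ‖c‖ = 2 * Real.pi := by
    rw [hc]
    simp [abs_of_nonneg Real.pi_pos.le]
  set F : ℝ → ℂ := fun t =>
    Complex.exp (2 * Real.pi * Complex.I * ((σ * t + p.eval (Real.exp t) : ℝ) : ℂ)) with hF
  have hFnorm : ∀ t, ‖F t‖ = 1 := by
    intro t
    rw [hF]
    simp [Complex.norm_exp]
  have hFderiv : ∀ t : ℝ, HasDerivAt F (c * ψ t * F t) t := by
    intro t
    have hφ : HasDerivAt (fun t : ℝ => σ * t + p.eval (Real.exp t)) (ψ t) t := by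
      have h1 : HasDerivAt (fun t : ℝ => σ * t) σ t := by
        simpa using (hasDerivAt_id t).const_mul σ
      have h2 : HasDerivAt (fun t : ℝ => p.eval (Real.exp t))
          (p.derivative.eval (Real.exp t) * Real.exp t) t :=
        (p.hasDerivAt (Real.exp t)).comp t (Real.hasDerivAt_exp t)
      have h3 := h1.add h2
      refine h3.congr_deriv ?_
      symm
      rw [hψdef, hq]
      simp
      ring
    have h4 : HasDerivAt (fun t : ℝ => ((σ * t + p.eval (Real.exp t) : ℝ) : ℂ)) (ψ t) t :=
      hφ.ofReal_comp
    have h5 := (h4.const_mul c).cexp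
    convert h5 using 1
    ring
  refine ⟨T₀, hT₀1, 3 / (2 * Real.pi), fun T hT => ?_⟩
  have hIcc : Set.uIcc T₀ T = Set.Icc T₀ T := Set.uIcc_of_le hT
  have hψ1 : ∀ t ∈ Set.Icc T₀ T, 1 ≤ ψ t := fun t ht => (hfacts t ht.1).1
  have hψpos : ∀ t ∈ Set.Icc T₀ T, 0 < ψ t := fun t ht => lt_of_lt_of_le one_pos (hψ1 t ht)
  have hne : ∀ t ∈ Set.Icc T₀ T, (c * (ψ t : ℂ)) ≠ 0 := fun t ht =>
    mul_ne_zero hc0 (by exact_mod_cast (hψpos t ht).ne')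
  set u : ℝ → ℂ := fun t => (c * (ψ t : ℂ))⁻¹ with hu
  set u' : ℝ → ℂ := fun t => -(c * (ψd t : ℂ)) / (c * (ψ t : ℂ)) ^ 2 with hu'
  have hudiff : ∀ t ∈ Set.uIcc T₀ T, HasDerivAt u (u' t) t := by
    intro t ht
    rw [hIcc] at ht
    have h1 : HasDerivAt (fun t : ℝ => c * (ψ t : ℂ)) (c * (ψd t : ℂ)) t :=
      ((hψderiv t).ofReal_comp).const_mul c
    have h2 := (hasDerivAt_inv (hne t ht)).scomp t h1
    refine h2.congr_deriv ?_
    symm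
    simp only [hu', smul_eq_mul]
    field_simp
  have hcont_inner : Continuous (fun t : ℝ => c * (ψ t : ℂ)) :=
    continuous_const.mul (Complex.continuous_ofReal.comp hψcont)
  have hu'int : IntervalIntegrable u' volume T₀ T := by
    apply ContinuousOn.intervalIntegrable
    rw [hIcc]
    apply ContinuousOn.div
    · exact (continuous_const.mul (Complex.continuous_ofReal.comp hψdcont)).neg.continuousOn
    · exact (hcont_inner.pow 2).continuousOn
    · intro t ht; exact pow_ne_zero 2 (hne t ht)
  have hFcont : Continuous F := by
    apply Complex.continuous_exp.comp
    exact continuous_const.mul (Complex.continuous_ofReal.comp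
      ((continuous_const.mul continuous_id).add (p.continuous.comp Real.continuous_exp)))
  have hv'int : IntervalIntegrable (fun t => c * (ψ t : ℂ) * F t) volume T₀ T :=
    ((hcont_inner.mul hFcont)).intervalIntegrable _ _
  have ibp := intervalIntegral.integral_mul_deriv_eq_deriv_mul hudiff
      (fun t _ => hFderiv t) hu'int hv'int
  have hintF : ∫ t in T₀..T, F t = u T * F T - u T₀ * F T₀ - ∫ t in T₀..T, u' t * F t := by
    rw [← ibp]
    apply intervalIntegral.integral_congr
    intro t ht
    rw [hIcc] at ht
    show F t = u t * (c * (ψ t : ℂ) * F t)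
    rw [hu, ← mul_assoc, inv_mul_cancel₀ (hne t ht), one_mul]
  have hunorm : ∀ t ∈ Set.Icc T₀ T, ‖u t‖ ≤ 1 / (2 * Real.pi) := by
    intro t ht
    have e2 : ‖c * (ψ t : ℂ)‖ = 2 * Real.pi * ψ t := by
      rw [norm_mul, hcnorm, Complex.norm_real, Real.norm_eq_abs, abs_of_pos (hψpos t ht)]
    rw [hu, norm_inv, e2, one_div]
    apply inv_anti₀ (by positivity)
    nlinarith [hψ1 t ht, Real.pi_pos]
  -- the integral of ‖u'‖
  have hu'norm : ∀ t ∈ Set.Icc T₀ T, ‖u' t * F t‖ = ψd t / (2 * Real.pi * (ψ t) ^ 2) := by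
    intro t ht
    have e1 : ‖c * (ψd t : ℂ)‖ = 2 * Real.pi * ψd t := by
      rw [norm_mul, hcnorm, Complex.norm_real, Real.norm_eq_abs,
        abs_of_nonneg (hfacts t ht.1).2]
    have e2 : ‖c * (ψ t : ℂ)‖ = 2 * Real.pi * ψ t := by
      rw [norm_mul, hcnorm, Complex.norm_real, Real.norm_eq_abs, abs_of_pos (hψpos t ht)]
    have : ‖u' t * F t‖ = ‖-(c * (ψd t : ℂ)) / (c * (ψ t : ℂ)) ^ 2‖ := by
      rw [norm_mul, hFnorm, mul_one]
    rw [this, norm_div, norm_neg, norm_pow, e1, e2]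
    have hψne : ψ t ≠ 0 := (hψpos t ht).ne'
    field_simp
  have hGderiv : ∀ t ∈ Set.uIcc T₀ T,
      HasDerivAt (fun t => -(2 * Real.pi * ψ t)⁻¹) (ψd t / (2 * Real.pi * (ψ t) ^ 2)) t := by
    intro t ht
    rw [hIcc] at ht
    have h1 : HasDerivAt (fun t : ℝ => 2 * Real.pi * ψ t) (2 * Real.pi * ψd t) t :=
      (hψderiv t).const_mul _
    have hψposx := hψpos t ht
    have h2 := (h1.inv (by positivity)).neg
    refine h2.congr_deriv ?_
    symm
    have hψne : ψ t ≠ 0 := (hψpos t ht).ne'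
    field_simp
  have hhint : IntervalIntegrable (fun t => ψd t / (2 * Real.pi * (ψ t) ^ 2)) volume T₀ T := by
    apply ContinuousOn.intervalIntegrable
    rw [hIcc]
    apply ContinuousOn.div hψdcont.continuousOn
    · exact (continuous_const.mul (hψcont.pow 2)).continuousOn
    · intro t ht
      have := hψpos t ht
      positivity
  have hIeq : (∫ t in T₀..T, ‖u' t * F t‖)
      = (2 * Real.pi * ψ T₀)⁻¹ - (2 * Real.pi * ψ T)⁻¹ := by
    have h1 : (∫ t in T₀..T, ‖u' t * F t‖)
        = ∫ t in T₀..T, ψd t / (2 * Real.pi * (ψ t) ^ 2) := by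
      apply intervalIntegral.integral_congr
      intro t ht
      rw [hIcc] at ht
      exact hu'norm t ht
    rw [h1, intervalIntegral.integral_eq_sub_of_hasDerivAt hGderiv hhint]
    ring
  have hTmem : T ∈ Set.Icc T₀ T := ⟨hT, le_refl T⟩
  have hT₀mem : T₀ ∈ Set.Icc T₀ T := ⟨le_refl T₀, hT⟩
  have hbound3 : ‖∫ t in T₀..T, u' t * F t‖ ≤ 1 / (2 * Real.pi) := by
    calc ‖∫ t in T₀..T, u' t * F t‖ ≤ ∫ t in T₀..T, ‖u' t * F t‖ :=
          intervalIntegral.norm_integral_le_integral_norm hT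
      _ = (2 * Real.pi * ψ T₀)⁻¹ - (2 * Real.pi * ψ T)⁻¹ := hIeq
      _ ≤ (2 * Real.pi * ψ T₀)⁻¹ := by
          have hψT := hψpos T hTmem
          simp only [sub_le_self_iff]
          positivity
      _ ≤ 1 / (2 * Real.pi) := by
          rw [one_div]
          apply inv_anti₀ (by positivity)
          nlinarith [hψ1 T₀ hT₀mem, Real.pi_pos]
  calc ‖∫ t in T₀..T, F t‖
      = ‖u T * F T - u T₀ * F T₀ - ∫ t in T₀..T, u' t * F t‖ := by rw [hintF]
    _ ≤ ‖u T * F T - u T₀ * F T₀‖ + ‖∫ t in T₀..T, u' t * F t‖ := norm_sub_le _ _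
    _ ≤ (‖u T * F T‖ + ‖u T₀ * F T₀‖) + ‖∫ t in T₀..T, u' t * F t‖ := by
        gcongr; exact norm_sub_le _ _
    _ ≤ (1 / (2 * Real.pi) + 1 / (2 * Real.pi)) + 1 / (2 * Real.pi) := by
        have b1 : ‖u T * F T‖ ≤ 1 / (2 * Real.pi) := by
          rw [norm_mul, hFnorm, mul_one]; exact hunorm T hTmem
        have b2 : ‖u T₀ * F T₀‖ ≤ 1 / (2 * Real.pi) := by
          rw [norm_mul, hFnorm, mul_one]; exact hunorm T₀ hT₀mem
        exact add_le_add (add_le_add b1 b2) hbound3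
    _ = 3 / (2 * Real.pi) := by ring

private lemma intervalIntegral_conj {f : ℝ → ℂ} {a b : ℝ} :
    ∫ t in a..b, (starRingEnd ℂ) (f t) = (starRingEnd ℂ) (∫ t in a..b, f t) := by
  simp only [intervalIntegral, integral_conj, map_sub]

/-- boundedness of the oscillatory integrals `∫_{T₀}^{T} e^{2πi(σt+p(e^t))} dt`. -/
theorem stmt3 (σ : ℝ) (p : Polynomial ℝ) (h0 : p.coeff 0 = 0) (hp : p ≠ 0)
    (hd : 1 ≤ p.natDegree) :
    ∃ T₀ : ℝ, 1 ≤ T₀ ∧ ∃ C : ℝ, ∀ T : ℝ, T₀ ≤ T →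
      ‖∫ t in T₀..T,
          Complex.exp (2 * Real.pi * Complex.I * ((σ * t + p.eval (Real.exp t) : ℝ) : ℂ))‖ ≤ C := by
  rcases (Polynomial.leadingCoeff_ne_zero.mpr hp).lt_or_gt with hneg | hpos
  · have hp' : -p ≠ 0 := neg_ne_zero.mpr hp
    have hd' : 1 ≤ (-p).natDegree := by rwa [Polynomial.natDegree_neg]
    have hlc' : 0 < (-p).leadingCoeff := by
      rw [Polynomial.leadingCoeff_neg]; linarith
    obtain ⟨T₀, hT₀, C, hC⟩ := stmt3_aux (-σ) (-p) hp' hd' hlc'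
    refine ⟨T₀, hT₀, C, fun T hT => ?_⟩
    have hkey := hC T hT
    have heq : ∀ t : ℝ, Complex.exp (2 * Real.pi * Complex.I *
          ((-σ * t + (-p).eval (Real.exp t) : ℝ) : ℂ))
        = (starRingEnd ℂ) (Complex.exp (2 * Real.pi * Complex.I *
          ((σ * t + p.eval (Real.exp t) : ℝ) : ℂ))) := by
      intro t
      rw [← Complex.exp_conj]
      congr 1
      simp only [map_mul, Complex.conj_I, Complex.conj_ofReal, map_ofNat,
        Polynomial.eval_neg]
      push_cast
      ring
    rw [intervalIntegral.integral_congr (fun t _ => heq t), intervalIntegral_conj,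
      RCLike.norm_conj] at hkey
    exact hkey
  · exact stmt3_aux σ p hp hd hpos
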